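/- Let f_1,…,f_k : ℝⁿ → ℝ each be differentiable at x ∈ ℝⁿ, and let v̄ be an element of minimal Euclidean norm in −conv{∇f_1(x),…,∇f_k(x)}. If v̄ ≠ 0, then v̄ is a common descent direction for all objectives at x: there exists t̄ > 0 such that f_i(x + t v̄) < f_i(x) for all i ∈ {1,…,k} and all t ∈ (0, t̄]. -/

import Mathlib

/-- the minimal-norm element of the negative convex hull of the gradients,
if nonzero, is a common descent direction for all objectives at `x`. -/
theorem min_norm_convexHull_gradients_common_descent {n k : ℕ}
    (f : Fin k → EuclideanSpace ℝ (Fin n) → ℝ) (x : EuclideanSpace ℝ (Fin n))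
    (hdiff : ∀ i, DifferentiableAt ℝ (f i) x)
    (vbar : EuclideanSpace ℝ (Fin n))
    (hvmem : vbar ∈ -(convexHull ℝ (Set.range fun i => gradient (f i) x)))
    (hvmin : ∀ w ∈ -(convexHull ℝ (Set.range fun i => gradient (f i) x)), ‖vbar‖ ≤ ‖w‖)
    (hv0 : vbar ≠ 0) :
    ∃ tbar : ℝ, 0 < tbar ∧ ∀ i : Fin k, ∀ t : ℝ, 0 < t → t ≤ tbar →
      f i (x + t • vbar) < f i x := by
  set K := -(convexHull ℝ (Set.range fun i => gradient (f i) x)) with hK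
  have hKconv : Convex ℝ K := (convex_convexHull ℝ _).neg
  -- variational inequality for the minimal-norm point
  have hvar : ∀ w ∈ K, ‖vbar‖ ^ 2 ≤ inner ℝ vbar w := by
    intro w hw
    by_contra hcon
    push_neg at hcon
    have ha : (inner ℝ vbar (w - vbar) : ℝ) < 0 := by
      rw [inner_sub_right, real_inner_self_eq_norm_sq]
      linarith
    set a : ℝ := inner ℝ vbar (w - vbar) with hadef
    set b : ℝ := ‖w - vbar‖ ^ 2 with hbdef
    have hb0 : 0 ≤ b := sq_nonneg _
    have hbpos : 0 < b := by
      rcases hb0.lt_or_eq with h | h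
      · exact h
      · exfalso
        have : w - vbar = 0 := by
          have := h.symm
          rw [hbdef, sq_eq_zero_iff] at this
          exact norm_eq_zero.mp this
        rw [hadef, this, inner_zero_right] at ha
        exact lt_irrefl 0 ha
    set θ : ℝ := min 1 (-a / b) with hθdef
    have hθpos : 0 < θ := lt_min one_pos (div_pos (by linarith) hbpos)
    have hθ1 : θ ≤ 1 := min_le_left _ _
    have hzmem : (1 - θ) • vbar + θ • w ∈ K :=
      hKconv hvmem hw (by linarith) hθpos.le (by ring)
    have hnorm : ‖vbar‖ ≤ ‖(1 - θ) • vbar + θ • w‖ := hvmin _ hzmem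
    have heq : (1 - θ) • vbar + θ • w = vbar + θ • (w - vbar) := by
      module
    rw [heq] at hnorm
    have hexp : ‖vbar + θ • (w - vbar)‖ ^ 2
        = ‖vbar‖ ^ 2 + 2 * (θ * a) + θ ^ 2 * b := by
      rw [norm_add_sq_real, real_inner_smul_right, norm_smul, Real.norm_eq_abs,
        abs_of_pos hθpos, mul_pow, ← hadef, ← hbdef]
    have hsq : ‖vbar‖ ^ 2 ≤ ‖vbar + θ • (w - vbar)‖ ^ 2 :=
      pow_le_pow_left₀ (norm_nonneg _) hnorm 2
    rw [hexp] at hsq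
    have h1 : 0 ≤ 2 * a + θ * b := by
      have h2 : 0 ≤ θ * (2 * a + θ * b) := by nlinarith
      nlinarith
    have hθb : θ * b ≤ -a := by
      calc θ * b ≤ (-a / b) * b := by
              exact mul_le_mul_of_nonneg_right (min_le_right _ _) hb0
        _ = -a := by field_simp
    nlinarith
  -- per-objective descent
  have key : ∀ i : Fin k, ∃ u : ℝ, 0 < u ∧ ∀ t : ℝ, 0 < t → t ≤ u →
      f i (x + t • vbar) < f i x := by
    intro i
    set g : EuclideanSpace ℝ (Fin n) := gradient (f i) x with hg
    have hgK : -g ∈ K := Set.neg_mem_neg.mpr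
      (subset_convexHull ℝ _ (Set.mem_range_self i))
    have hineq : ‖vbar‖ ^ 2 ≤ inner ℝ vbar (-g) := hvar _ hgK
    have hcneg : (inner ℝ g vbar : ℝ) < 0 := by
      rw [inner_neg_right] at hineq
      have hvpos : (0:ℝ) < ‖vbar‖ ^ 2 := pow_pos (norm_pos_iff.mpr hv0) 2
      rw [real_inner_comm]
      linarith
    -- derivative of t ↦ f i (x + t • vbar) at 0
    have hgrad : HasGradientAt (f i) g x := (hdiff i).hasGradientAt
    have hfd : HasFDerivAt (f i)
        ((InnerProductSpace.toDual ℝ (EuclideanSpace ℝ (Fin n)) g) :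
          EuclideanSpace ℝ (Fin n) →L[ℝ] ℝ) x := hgrad.hasFDerivAt
    have hc : HasDerivAt (fun t : ℝ => x + t • vbar) vbar 0 := by
      simpa using ((hasDerivAt_id (0:ℝ)).smul_const vbar).const_add x
    have hF : HasDerivAt (fun t : ℝ => f i (x + t • vbar))
        (inner ℝ g vbar : ℝ) 0 := by
      have hfd0 : HasFDerivAt (f i)
          ((InnerProductSpace.toDual ℝ (EuclideanSpace ℝ (Fin n)) g) :
            EuclideanSpace ℝ (Fin n) →L[ℝ] ℝ) (x + (0:ℝ) • vbar) := by
        simpa using hfd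
      have := hfd0.comp_hasDerivAt 0 hc
      exact this
    set φ : ℝ → ℝ := fun t => f i (x + t • vbar) with hφ
    have hslope : Filter.Tendsto (slope φ 0) (nhdsWithin 0 {(0:ℝ)}ᶜ)
        (nhds (inner ℝ g vbar : ℝ)) := hasDerivAt_iff_tendsto_slope.mp hF
    have hev : ∀ᶠ t in nhdsWithin 0 {(0:ℝ)}ᶜ, slope φ 0 t < 0 :=
      hslope.eventually_lt_const hcneg
    have hev' : ∀ᶠ t in nhdsWithin 0 (Set.Ioi (0:ℝ)), slope φ 0 t < 0 :=
      hev.filter_mono (nhdsWithin_mono 0 (fun t ht => ne_of_gt ht))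
    rw [Filter.eventually_iff] at hev'
    obtain ⟨u, hu, hsub⟩ := mem_nhdsGT_iff_exists_Ioc_subset.mp hev'
    refine ⟨u, hu, fun t ht htu => ?_⟩
    have hst : slope φ 0 t < 0 := hsub ⟨ht, htu⟩
    have : (φ t - φ 0) / t < 0 := by
      simpa [slope_def_field] using hst
    have hlt : φ t < φ 0 := by
      have := (div_neg_iff).mp this
      rcases this with ⟨h1, h2⟩ | ⟨h1, h2⟩
      · linarith
      · linarith
    simpa [hφ] using hlt
  choose u hu hdesc using key
  rcases Nat.eq_zero_or_pos k with hk | hk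
  · subst hk
    exact ⟨1, one_pos, fun i => i.elim0⟩
  · have hne : (Finset.univ : Finset (Fin k)).Nonempty := by
      have : Nonempty (Fin k) := Fin.pos_iff_nonempty.mp hk
      exact Finset.univ_nonempty
    refine ⟨Finset.univ.inf' hne u, ?_, ?_⟩
    · exact (Finset.lt_inf'_iff hne).mpr fun i _ => hu i
    · intro i t ht htbar
      exact hdesc i t ht (le_trans htbar (Finset.inf'_le u (Finset.mem_univ i)))
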